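/- Let $x_1,\dots,x_n$ be the roots of a monic degree-$n$ polynomial $p_n$ and $r_1,\dots,r_\ell$ the roots (with multiplicity) of $p_n^{(n-\ell)}$, where $2 \le \ell \le n$. Then $\frac{1}{n^2(n-1)} \sum_{1 \le i < j \le n} (x_i - x_j)^2 = \frac{1}{\ell^2(\ell-1)} \sum_{1 \le i < j \le \ell} (r_i - r_j)^2$. -/

import Mathlib

open Polynomial Finset

-- coefficient of prod (X - C y i)
lemma coeff_prod_sub {m : ℕ} (y : Fin m → ℂ) (k : ℕ) (h : k ≤ m) :
    (∏ i : Fin m, (X - C (y i))).coeff k =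
      (-1) ^ (m - k) * ∑ t ∈ (univ : Finset (Fin m)).powersetCard (m - k), ∏ i ∈ t, y i := by
  have h1 : (∏ i : Fin m, (X - C (y i))) =
      (((univ : Finset (Fin m)).val.map y).map fun t => X - C t).prod := by
    rw [Multiset.map_map]
    rfl
  have hcard : Multiset.card ((univ : Finset (Fin m)).val.map y) = m := by simp
  rw [h1, Multiset.prod_X_sub_C_coeff _ (by rw [hcard]; exact h), hcard,
    Finset.esymm_map_val]

lemma sum_powersetCard_one {ι : Type*} [DecidableEq ι] (s : Finset ι) (y : ι → ℂ) :
    ∑ t ∈ s.powersetCard 1, ∏ i ∈ t, y i = ∑ i ∈ s, y i := by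
  rw [Finset.powersetCard_one, Finset.sum_map]
  simp

lemma sum_powersetCard_two {ι : Type*} [DecidableEq ι] (s : Finset ι) (y : ι → ℂ) :
    ∑ t ∈ s.powersetCard 2, ∏ i ∈ t, y i =
      ((∑ i ∈ s, y i) ^ 2 - ∑ i ∈ s, (y i) ^ 2) / 2 := by
  induction s using Finset.induction_on with
  | empty =>
    rw [show Finset.powersetCard 2 (∅ : Finset ι) = ∅ from
      Finset.powersetCard_eq_empty.mpr (by simp)]
    simp
  | @insert a s ha ih =>
    rw [show (2 : ℕ) = Nat.succ 1 from rfl, Finset.powersetCard_succ_insert ha,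
      Finset.sum_union, Finset.sum_image, Finset.sum_insert ha, Finset.sum_insert ha]
    · have h1 : ∑ t ∈ s.powersetCard 1, ∏ i ∈ insert a t, y i
          = y a * ∑ i ∈ s, y i := by
        rw [← sum_powersetCard_one s y, Finset.mul_sum]
        apply Finset.sum_congr rfl
        intro t ht
        rw [Finset.mem_powersetCard] at ht
        rw [Finset.prod_insert (fun hat => ha (ht.1 hat))]
      rw [h1, ih]
      ring
    · intro t ht u hu htu
      rw [Finset.mem_coe, Finset.mem_powersetCard] at ht hu
      have : ∀ v : Finset ι, v ⊆ s → (insert a v).erase a = v := by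
        intro v hv
        rw [Finset.erase_insert (fun hav => ha (hv hav))]
      rw [← this t ht.1, ← this u hu.1, htu]
    · rw [Finset.disjoint_right]
      intro t ht hts
      simp only [Finset.mem_image] at ht
      obtain ⟨u, hu, rfl⟩ := ht
      rw [Finset.mem_powersetCard] at hts
      exact ha (hts.1 (Finset.mem_insert_self a u))

lemma pair_sum_eq (m : ℕ) (y : Fin m → ℂ) :
    ∑ p ∈ Finset.univ.filter (fun p : Fin m × Fin m => p.1 < p.2), (y p.1 - y p.2) ^ 2
      = (m : ℂ) * (∑ i, (y i) ^ 2) - (∑ i, y i) ^ 2 := by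
  set f : Fin m × Fin m → ℂ := fun p => (y p.1 - y p.2) ^ 2 with hf
  have htot : ∑ p : Fin m × Fin m, f p
      = 2 * ((m : ℂ) * (∑ i, (y i) ^ 2) - (∑ i, y i) ^ 2) := by
    rw [Fintype.sum_prod_type]
    have : ∀ i : Fin m, ∑ j, f (i, j)
        = (m : ℂ) * (y i) ^ 2 - 2 * y i * (∑ j, y j) + ∑ j, (y j) ^ 2 := by
      intro i
      simp only [hf]
      rw [Finset.sum_congr rfl (fun j _ => by ring_nf :
        ∀ j ∈ (univ : Finset (Fin m)), (y i - y j) ^ 2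
          = (y i) ^ 2 - 2 * y i * y j + (y j) ^ 2)]
      rw [Finset.sum_add_distrib, Finset.sum_sub_distrib, Finset.sum_const,
        ← Finset.mul_sum, card_univ, Fintype.card_fin, nsmul_eq_mul]
    rw [Finset.sum_congr rfl (fun i _ => this i), Finset.sum_add_distrib,
      Finset.sum_sub_distrib, ← Finset.mul_sum, Finset.sum_const, card_univ,
      Fintype.card_fin, nsmul_eq_mul]
    ring_nf
    rw [show ∑ x : Fin m, (y x * ∑ j, y j) * 2 = 2 * (∑ i, y i) * (∑ j, y j) by
      rw [← Finset.sum_mul, ← Finset.sum_mul]; ring]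
    ring
  have hsplit := (Finset.sum_filter_add_sum_filter_not Finset.univ
    (fun p : Fin m × Fin m => p.1 < p.2) f).symm
  have hneg : ∑ p ∈ Finset.univ.filter (fun p : Fin m × Fin m => ¬ p.1 < p.2), f p
      = ∑ p ∈ Finset.univ.filter (fun p : Fin m × Fin m => p.1 < p.2), f p := by
    have h1 := (Finset.sum_filter_add_sum_filter_not
      (Finset.univ.filter (fun p : Fin m × Fin m => ¬ p.1 < p.2))
      (fun p : Fin m × Fin m => p.2 < p.1) f).symm
    rw [h1, Finset.filter_filter, Finset.filter_filter]
    have h2 : ∑ p ∈ Finset.univ.filter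
        (fun p : Fin m × Fin m => ¬ p.1 < p.2 ∧ ¬ p.2 < p.1), f p = 0 := by
      apply Finset.sum_eq_zero
      intro p hp
      rw [Finset.mem_filter] at hp
      have : p.1 = p.2 := le_antisymm (not_lt.mp hp.2.2) (not_lt.mp hp.2.1)
      simp [hf, this]
    rw [h2, add_zero]
    apply Finset.sum_nbij' (fun p => Prod.swap p) (fun p => Prod.swap p)
    · intro p hp
      rw [Finset.mem_filter] at hp ⊢
      exact ⟨Finset.mem_univ _, hp.2.2⟩
    · intro p hp
      rw [Finset.mem_filter] at hp ⊢
      refine ⟨Finset.mem_univ _, not_lt.mpr (le_of_lt hp.2), hp.2⟩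
    · intro p _; simp
    · intro p _; simp
    · intro p _
      simp only [hf, Prod.fst_swap, Prod.snd_swap]
      ring
  rw [hneg] at hsplit
  rw [htot] at hsplit
  have h2 : (2:ℂ) * ∑ p ∈ Finset.univ.filter (fun p : Fin m × Fin m => p.1 < p.2), f p
      = 2 * ((m : ℂ) * (∑ i, (y i) ^ 2) - (∑ i, y i) ^ 2) := by
    rw [hsplit]; ring
  have := mul_left_cancel₀ (two_ne_zero' ℂ) h2
  exact this

lemma descFactorial_step (m k : ℕ) :
    (m + 1).descFactorial k * (m + 1 - k) = (m + 1) * m.descFactorial k := by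
  cases k with
  | zero => simp
  | succ k =>
    rw [Nat.succ_descFactorial_succ, Nat.descFactorial_succ, Nat.succ_sub_succ]
    ring

theorem variance_conservation_law
    (n ℓ : ℕ) (hℓ2 : 2 ≤ ℓ) (hℓn : ℓ ≤ n)
    (x : Fin n → ℂ) (r : Fin ℓ → ℂ)
    (hroots : (Polynomial.derivative)^[n - ℓ] (∏ i : Fin n, (X - C (x i))) =
      C (((n.factorial / ℓ.factorial : ℕ) : ℂ)) * ∏ i : Fin ℓ, (X - C (r i))) :
    (1 / ((n : ℂ) ^ 2 * (n - 1))) *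
        ∑ p ∈ Finset.univ.filter (fun p : Fin n × Fin n => p.1 < p.2), (x p.1 - x p.2) ^ 2 =
      (1 / ((ℓ : ℂ) ^ 2 * (ℓ - 1))) *
        ∑ p ∈ Finset.univ.filter (fun p : Fin ℓ × Fin ℓ => p.1 < p.2), (r p.1 - r p.2) ^ 2 := by
  have hn2 : 2 ≤ n := le_trans hℓ2 hℓn
  have hcfac : (n.factorial / ℓ.factorial : ℕ) = n.descFactorial (n - ℓ) := by
    rw [Nat.descFactorial_eq_div (by omega : n - ℓ ≤ n), show n - (n - ℓ) = ℓ by omega]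
  have hA := congrArg (fun q : Polynomial ℂ => q.coeff (ℓ - 1)) hroots
  have hB := congrArg (fun q : Polynomial ℂ => q.coeff (ℓ - 2)) hroots
  simp only [Polynomial.coeff_iterate_derivative, Polynomial.coeff_C_mul] at hA hB
  rw [show ℓ - 1 + (n - ℓ) = n - 1 by omega] at hA
  rw [show ℓ - 2 + (n - ℓ) = n - 2 by omega] at hB
  rw [coeff_prod_sub x (n - 1) (by omega), show n - (n - 1) = 1 by omega,
    sum_powersetCard_one, coeff_prod_sub r (ℓ - 1) (by omega),
    show ℓ - (ℓ - 1) = 1 by omega, sum_powersetCard_one] at hA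
  rw [coeff_prod_sub x (n - 2) (by omega), show n - (n - 2) = 2 by omega,
    sum_powersetCard_two, coeff_prod_sub r (ℓ - 2) (by omega),
    show ℓ - (ℓ - 2) = 2 by omega, sum_powersetCard_two] at hB
  rw [hcfac] at hA hB
  rw [pair_sum_eq, pair_sum_eq]
  rw [nsmul_eq_mul] at hA hB
  norm_num at hA hB
  set P := ∑ i : Fin n, x i with hPd
  set P' := ∑ i : Fin ℓ, r i with hP'd
  set Sx := ∑ i : Fin n, x i ^ 2 with hSxd
  set Sr := ∑ i : Fin ℓ, r i ^ 2 with hSrd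
  set A := (((n - 1).descFactorial (n - ℓ) : ℕ) : ℂ) with hAd
  set B := (((n - 2).descFactorial (n - ℓ) : ℕ) : ℂ) with hBd
  set D := ((n.descFactorial (n - ℓ) : ℕ) : ℂ) with hDd
  have k1 : n.descFactorial (n - ℓ) * ℓ = n * (n - 1).descFactorial (n - ℓ) := by
    have h := descFactorial_step (n - 1) (n - ℓ)
    rw [show n - 1 + 1 = n by omega, show n - (n - ℓ) = ℓ by omega] at h
    exact h
  have k2 : (n - 1).descFactorial (n - ℓ) * (ℓ - 1)
      = (n - 1) * (n - 2).descFactorial (n - ℓ) := by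
    have h := descFactorial_step (n - 2) (n - ℓ)
    rw [show n - 2 + 1 = n - 1 by omega, show n - 1 - (n - ℓ) = ℓ - 1 by omega] at h
    exact h
  have c1 : D * (ℓ : ℂ) = (n : ℂ) * A := by
    rw [hDd, hAd]; exact_mod_cast congrArg (Nat.cast : ℕ → ℂ) k1
  have c2 : A * ((ℓ : ℂ) - 1) = ((n : ℂ) - 1) * B := by
    have h := congrArg (Nat.cast : ℕ → ℂ) k2
    push_cast [Nat.cast_sub (show 1 ≤ ℓ by omega)] at h
    rw [hAd, hBd]
    push_cast [Nat.cast_sub (show 1 ≤ n by omega), Nat.cast_sub (show 2 ≤ n by omega)] at h ⊢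
    linear_combination h
  have hD0 : D ≠ 0 := by
    rw [hDd]
    simp only [ne_eq, Nat.cast_eq_zero]
    intro h
    have := Nat.descFactorial_eq_zero_iff_lt.mp h
    omega
  have hn0 : (n : ℂ) ≠ 0 := Nat.cast_ne_zero.mpr (by omega)
  have hl0 : (ℓ : ℂ) ≠ 0 := Nat.cast_ne_zero.mpr (by omega)
  have hn1 : (n : ℂ) - 1 ≠ 0 := sub_ne_zero.mpr (by exact_mod_cast (by omega : n ≠ 1))
  have hl1 : (ℓ : ℂ) - 1 ≠ 0 := sub_ne_zero.mpr (by exact_mod_cast (by omega : ℓ ≠ 1))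
  have hP : (ℓ : ℂ) * P = (n : ℂ) * P' := by
    apply mul_left_cancel₀ hD0
    linear_combination (n : ℂ) * hA + P * c1
  have hQ : (ℓ : ℂ) * ((ℓ : ℂ) - 1) * (P ^ 2 - Sx)
      = (n : ℂ) * ((n : ℂ) - 1) * (P' ^ 2 - Sr) := by
    apply mul_left_cancel₀ hD0
    linear_combination ((ℓ : ℂ) - 1) * (P ^ 2 - Sx) * c1
      + (n : ℂ) * (P ^ 2 - Sx) * c2 + 2 * (n : ℂ) * ((n : ℂ) - 1) * hB
  field_simp
  linear_combination (-(ℓ : ℂ) * n) * hQ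
    + ((n : ℂ) - 1) * ((ℓ : ℂ) - 1) * ((ℓ : ℂ) * P + (n : ℂ) * P') * hP
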